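/- arXiv:1901.06113 — 2 statements merged into one kernel-verified Lean document; each statement's English description precedes it below -/
import Mathlib

section
/- There is no function f: ℝ^{4N} → ℂ with |f(z)| = 1 for all z that satisfies: for all n and all v₁,…,v_n, w₁,…,w_n ∈ ℝ^{2N}, the matrix with (i,j)-entry e^{−(i/2)(v_iᵀΩw_j + w_iᵀΩv_j)} f(v_j−v_i, w_j−w_i) is positive semidefinite, where Ω is the standard 2N×2N symplectic matrix. -/
open scoped ComplexOrder
open Complex Matrix

lemma psd3_key (M : Matrix (Fin 3) (Fin 3) ℂ) (hM : M.PosSemidef)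
    (h00 : M 0 0 = 1) (h11 : M 1 1 = 1) (h01 : ‖M 0 1‖ = 1) :
    M 0 2 = M 1 2 * M 0 1 := by
  set x : Fin 3 → ℂ := ![1, -(starRingEnd ℂ) (M 0 1), 0] with hx
  have habs : (M 0 1) * (starRingEnd ℂ) (M 0 1) = 1 := by
    rw [Complex.mul_conj]
    norm_cast
    simp [Complex.normSq_eq_norm_sq, h01]
  have h10 : M 1 0 = (starRingEnd ℂ) (M 0 1) := by
    have := hM.1.apply 1 0
    simpa using this.symm
  have hzero : star x ⬝ᵥ M *ᵥ x = 0 := by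
    simp [dotProduct, mulVec, Fin.sum_univ_three, hx, h00, h11, h10]
    linear_combination -habs
  have hMx := (hM.dotProduct_mulVec_zero_iff x).mp hzero
  have h2 := congrFun hMx 2
  simp [mulVec, dotProduct, Fin.sum_univ_three, hx] at h2
  -- h2 : M 2 0 - M 2 1 * conj (M 0 1) = 0 (some form)
  have h20 : M 2 0 = M 2 1 * (starRingEnd ℂ) (M 0 1) := by linear_combination h2
  have e02 : M 0 2 = (starRingEnd ℂ) (M 2 0) := by
    have := hM.1.apply 0 2
    simpa using this.symm
  have e12 : M 1 2 = (starRingEnd ℂ) (M 2 1) := by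
    have := hM.1.apply 1 2
    simpa using this.symm
  rw [e02, h20, RingHom.map_mul, ← e12]
  simp


/-- The standard symplectic matrix `Ω = [[0, I],[−I, 0]]` on `ℝ^{2N}`. -/
noncomputable def sympMat (N : ℕ) : Matrix (Fin N ⊕ Fin N) (Fin N ⊕ Fin N) ℝ :=
  Matrix.fromBlocks 0 1 (-1) 0

theorem no_unimodular_function_in_CS0 (N : ℕ) (hN : 1 ≤ N) :
    ¬ ∃ f : ((Fin N ⊕ Fin N) → ℝ) × ((Fin N ⊕ Fin N) → ℝ) → ℂ,
      (∀ z, ‖f z‖ = 1) ∧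
      (∀ (n : ℕ) (v w : Fin n → ((Fin N ⊕ Fin N) → ℝ)),
        Matrix.PosSemidef (Matrix.of fun i j =>
          Complex.exp (-(I / 2) *
            (((dotProduct (v i) ((sympMat N).mulVec (w j)) : ℝ) : ℂ) +
             ((dotProduct (w i) ((sympMat N).mulVec (v j)) : ℝ) : ℂ))) *
          f (v j - v i, w j - w i))) := by
  rintro ⟨f, hu, hpos⟩
  have hne : ∀ z, f z ≠ 0 := by
    intro z h
    have := hu z
    rw [h] at this
    simp at this
  -- f 0 = 1
  have hf0 : f 0 = 1 := by
    have h1 := (posSemidef_iff_dotProduct_mulVec.mp (hpos 1 (fun _ => 0) (fun _ => 0))).2 (fun _ => 1)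
    simp [dotProduct, mulVec, Fin.sum_univ_one] at h1
    -- h1 : 0 ≤ f 0
    have him : (f 0).im = 0 := by
      have := (Complex.le_def.mp h1).2
      exact (by simpa using this.symm : (f (0, 0)).im = 0)
    have hre : 0 ≤ (f 0).re := by
      have := (Complex.le_def.mp h1).1
      exact (by simpa using this : 0 ≤ (f (0, 0)).re)
    have habs := hu 0
    have hfr : f 0 = ((f 0).re : ℂ) := by
      apply Complex.ext <;> simp [him]
    rw [hfr] at habs ⊢
    rw [Complex.norm_real, Real.norm_eq_abs, _root_.abs_of_nonneg hre] at habs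
    rw [habs]
    norm_num
  set i0 : Fin N := ⟨0, hN⟩ with hi0
  set p : (Fin N ⊕ Fin N) → ℝ := Pi.single (Sum.inl i0) Real.pi with hp
  set q : (Fin N ⊕ Fin N) → ℝ := Pi.single (Sum.inr i0) 1 with hq
  have hpq : dotProduct p ((sympMat N).mulVec q) = Real.pi := by
    simp [hp, hq, Matrix.mulVec_single, single_dotProduct, sympMat,
      Matrix.fromBlocks_apply₁₂, Matrix.one_apply_eq]
  have hqp : dotProduct q ((sympMat N).mulVec p) = -Real.pi := by
    simp [hp, hq, Matrix.mulVec_single, single_dotProduct, sympMat,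
      Matrix.fromBlocks_apply₂₁]
  have K1 := hpos 3 ![0, p, p] ![0, 0, q]
  have K2 := hpos 3 ![0, 0, p] ![0, q, q]
  have eq1 := psd3_key _ K1 (by simp [hf0, show f (0, 0) = 1 from hf0]) (by simp [hf0, show f (0, 0) = 1 from hf0]) (by simp [sub_zero, hu (p, 0)])
  have eq2 := psd3_key _ K2 (by simp [hf0, show f (0, 0) = 1 from hf0]) (by simp [hf0, show f (0, 0) = 1 from hf0]) (by simp [sub_zero, hu (0, q)])
  simp only [Matrix.of_apply, Matrix.cons_val_zero, Matrix.cons_val_one, Matrix.cons_val_two,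
    Matrix.tail_cons, Matrix.head_cons, zero_dotProduct, dotProduct_zero, Matrix.mulVec_zero,
    sub_zero, sub_self, hpq, hqp, Complex.ofReal_zero, Complex.ofReal_neg, add_zero, zero_add,
    mul_zero, mul_neg, neg_mul, neg_neg, neg_zero, Complex.exp_zero, one_mul] at eq1 eq2
  -- eq1 : f (p, q) = exp(-((I/2)*π)) * f (0, q) * f (p, 0) (up to assoc)
  -- eq2 : f (p, q) = exp((I/2)*π) * f (p, 0) * f (0, q) (up to assoc)
  have h := eq1.symm.trans eq2
  have h2 : (Complex.exp (-(I / 2 * ↑Real.pi)) - Complex.exp (I / 2 * ↑Real.pi)) *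
      (f (0, q) * f (p, 0)) = 0 := by linear_combination h
  rcases mul_eq_zero.mp h2 with h3 | h3
  · have hexp : Complex.exp (-(I / 2 * ↑Real.pi)) = Complex.exp (I / 2 * ↑Real.pi) :=
      sub_eq_zero.mp h3
    have hPI : Complex.exp (↑Real.pi * I) = 1 := by
      have : (↑Real.pi * I : ℂ) = (I / 2 * ↑Real.pi) + (I / 2 * ↑Real.pi) := by ring
      rw [this, Complex.exp_add]
      nth_rewrite 1 [← hexp]
      rw [← Complex.exp_add]
      simp
    rw [Complex.exp_pi_mul_I] at hPI
    norm_num at hPI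
  · rcases mul_eq_zero.mp h3 with h4 | h4
    · exact hne _ h4
    · exact hne _ h4
end

section
/- Let d ∈ ℕ and let p₁ be the uniform probability vector on ℤ_d², p₁(m) = 1/d² for all m. For any probability vector p₂ on ℤ_d², the kernel β(m,n) = Σ_{s∈ℤ_d²} p₂(s) e^{i S(n−m, s)}, where S((k₁,l₁),(k₂,l₂)) = (2π/d)(k₁l₂ − k₂l₁), is a positive semidefinite d²×d² matrix with β(m,m) = 1 for all m, and it satisfies (1/d²) Σ_{m,n} e^{i S(m−n, r)} β(m,n) √(p₁(m)p₁(n)) = p₂(r) for every r ∈ ℤ_d². -/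
open scoped ComplexOrder
open Complex

/-- The symplectic form on the finite phase space `ℤ_d × ℤ_d`. -/
noncomputable def SympZd (d : ℕ) (m n : ZMod d × ZMod d) : ℝ :=
  (2 * Real.pi / d) * ((m.1.val : ℝ) * (n.2.val : ℝ) - (n.1.val : ℝ) * (m.2.val : ℝ))

/-- The kernel `β(m,n) = Σ_s p₂(s) e^{i S(n−m, s)}`. -/
noncomputable def depolKernel (d : ℕ) [NeZero d] (p₂ : ZMod d × ZMod d → ℝ)
    (m n : ZMod d × ZMod d) : ℂ :=
  ∑ s : ZMod d × ZMod d, (p₂ s : ℂ) * Complex.exp (Complex.I * (SympZd d (n - m) s : ℂ))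

/-! ### Auxiliary lemmas -/

/-- The basic character `j ↦ e^{2πij/d}` on the integers. -/
noncomputable def ch (d : ℕ) (j : ℤ) : ℂ := Complex.exp (2 * Real.pi * Complex.I * j / d)

lemma ch_add (d : ℕ) (j k : ℤ) : ch d (j + k) = ch d j * ch d k := by
  rw [ch, ch, ch, ← Complex.exp_add]
  push_cast
  ring_nf

lemma ch_zero (d : ℕ) : ch d 0 = 1 := by simp [ch]

lemma ch_congr (d : ℕ) [NeZero d] {j k : ℤ} (h : (j : ZMod d) = k) : ch d j = ch d k := by
  obtain ⟨t, ht⟩ : (d : ℤ) ∣ j - k := by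
    rwa [← ZMod.intCast_zmod_eq_zero_iff_dvd, Int.cast_sub, sub_eq_zero]
  have hj : j = k + d * t := by linarith [ht]
  have hd : (d : ℂ) ≠ 0 := Nat.cast_ne_zero.2 (NeZero.ne d)
  rw [hj, ch, ch]
  push_cast
  rw [mul_add, add_div, Complex.exp_add]
  have : 2 * ↑Real.pi * I * (↑d * ↑t) / ↑d = (t : ℂ) * (2 * Real.pi * I) := by
    field_simp
  rw [this, Complex.exp_int_mul_two_pi_mul_I, mul_one]

lemma ch_conj (d : ℕ) (j : ℤ) : (starRingEnd ℂ) (ch d j) = ch d (-j) := by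
  rw [ch, ch, ← Complex.exp_conj]
  congr 1
  simp [map_div₀, map_mul, Complex.conj_I, Complex.conj_ofReal, map_ofNat]

lemma geomSumZMod (d : ℕ) [NeZero d] (c : ℤ) :
    ∑ x : ZMod d, ch d (c * (x.val : ℤ)) = if (c : ZMod d) = 0 then (d : ℂ) else 0 := by
  have hd : d ≠ 0 := NeZero.ne d
  have hprim := Complex.isPrimitiveRoot_exp d hd
  set w : ℂ := Complex.exp (2*Real.pi*I/d) ^ c with hw
  have key : ∀ x : ZMod d, ch d (c * (x.val : ℤ)) = w ^ x.val := by
    intro x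
    rw [hw, ch, ← zpow_natCast, ← zpow_mul, ← Complex.exp_int_mul]
    congr 1
    push_cast
    ring
  simp_rw [key]
  have hrange : ∑ x : ZMod d, w ^ x.val = ∑ i ∈ Finset.range d, w ^ i := by
    apply Finset.sum_nbij' (i := fun x : ZMod d => x.val) (j := fun i : ℕ => (i : ZMod d))
    · intro a _; exact Finset.mem_range.2 (ZMod.val_lt a)
    · intro a _; exact Finset.mem_univ _
    · intro a _; exact ZMod.natCast_rightInverse a
    · intro a ha; exact ZMod.val_cast_of_lt (Finset.mem_range.1 ha)
    · intro a _; rfl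
  rw [hrange]
  have hwd : w ^ d = 1 := by
    have hx : Complex.exp (2*Real.pi*I/d) ^ (d:ℕ) = 1 := hprim.pow_eq_one
    rw [hw, ← zpow_natCast, ← zpow_mul, mul_comm c (d:ℤ), zpow_mul, zpow_natCast, hx, one_zpow]
  by_cases h : (c : ZMod d) = 0
  · have hw1 : w = 1 := by
      rw [hw]
      exact (hprim.zpow_eq_one_iff_dvd c).2 ((ZMod.intCast_zmod_eq_zero_iff_dvd c d).1 h)
    simp [hw1, h]
  · have hw1 : w ≠ 1 := by
      rw [hw]
      intro hcon
      exact h ((ZMod.intCast_zmod_eq_zero_iff_dvd c d).2 ((hprim.zpow_eq_one_iff_dvd c).1 hcon))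
    rw [if_neg h, geom_sum_eq hw1, hwd, sub_self, zero_div]

lemma exp_symp (d : ℕ) (m n : ZMod d × ZMod d) :
    Complex.exp (Complex.I * (SympZd d m n : ℂ)) =
      ch d ((m.1.val : ℤ) * (n.2.val : ℤ) - (n.1.val : ℤ) * (m.2.val : ℤ)) := by
  rw [SympZd, ch]
  congr 1
  push_cast
  ring

lemma exp_symp_sub (d : ℕ) [NeZero d] (a b c : ZMod d × ZMod d) :
    Complex.exp (Complex.I * (SympZd d (a - b) c : ℂ)) =
      ch d (((a.1.val : ℤ) - (b.1.val : ℤ)) * (c.2.val : ℤ)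
        - (c.1.val : ℤ) * ((a.2.val : ℤ) - (b.2.val : ℤ))) := by
  rw [exp_symp]
  apply ch_congr
  push_cast [ZMod.natCast_val, ZMod.cast_id, Prod.fst_sub, Prod.snd_sub]
  ring

lemma coeff_zero (d : ℕ) [NeZero d] (a b : ZMod d) :
    ((((a.val : ℤ) - (b.val : ℤ)) : ℤ) : ZMod d) = 0 ↔ a = b := by
  push_cast [ZMod.natCast_val, ZMod.cast_id]
  exact sub_eq_zero

/-- The integer-valued symplectic pairing `S(m, s)` (divided by `2π/d`). -/
def sA (d : ℕ) (s m : ZMod d × ZMod d) : ℤ :=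
  (m.1.val : ℤ) * (s.2.val : ℤ) - (s.1.val : ℤ) * (m.2.val : ℤ)

lemma sum_swap3 {ι : Type*} [Fintype ι] (f : ι → ι → ι → ℂ) :
    (∑ m : ι, ∑ n : ι, ∑ s : ι, f m n s) = ∑ s : ι, ∑ m : ι, ∑ n : ι, f m n s :=
  calc (∑ m : ι, ∑ n : ι, ∑ s : ι, f m n s)
      = ∑ m : ι, ∑ s : ι, ∑ n : ι, f m n s :=
        Finset.sum_congr rfl (fun _ _ => by rw [Finset.sum_comm])
    _ = ∑ s : ι, ∑ m : ι, ∑ n : ι, f m n s := by rw [Finset.sum_comm]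

lemma depolKernel_eq (d : ℕ) [NeZero d] (p₂ : ZMod d × ZMod d → ℝ)
    (m n : ZMod d × ZMod d) :
    depolKernel d p₂ m n =
      ∑ s : ZMod d × ZMod d, (p₂ s : ℂ) * (ch d (-(sA d s m)) * ch d (sA d s n)) := by
  rw [depolKernel]
  refine Finset.sum_congr rfl fun s _ => ?_
  rw [exp_symp_sub, ← ch_add]
  congr 2
  simp only [sA]
  ring

theorem depolarizing_channel_compatible (d : ℕ) [NeZero d]
    (p₁ : ZMod d × ZMod d → ℝ) (hp₁ : ∀ m, p₁ m = 1 / (d : ℝ)^2)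
    (p₂ : ZMod d × ZMod d → ℝ) (hp₂pos : ∀ m, 0 ≤ p₂ m) (hp₂le : ∀ m, p₂ m ≤ 1)
    (hp₂sum : ∑ m : ZMod d × ZMod d, p₂ m = 1) :
    Matrix.PosSemidef (Matrix.of fun m n : ZMod d × ZMod d => depolKernel d p₂ m n) ∧
    (∀ m : ZMod d × ZMod d, depolKernel d p₂ m m = 1) ∧
    (∀ r : ZMod d × ZMod d,
      (1 / (d : ℂ)^2) * ∑ m : ZMod d × ZMod d, ∑ n : ZMod d × ZMod d,
        Complex.exp (Complex.I * (SympZd d (m - n) r : ℂ)) * depolKernel d p₂ m n *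
          ((Real.sqrt (p₁ m * p₁ n) : ℝ) : ℂ)
      = (p₂ r : ℂ)) := by
  have hdC : (d : ℂ) ≠ 0 := Nat.cast_ne_zero.2 (NeZero.ne d)
  refine ⟨Matrix.posSemidef_iff_dotProduct_mulVec.mpr ⟨?_, ?_⟩, ?_, ?_⟩
  · -- Hermitian
    ext m n
    simp only [Matrix.conjTranspose_apply, Matrix.of_apply, RCLike.star_def]
    rw [depolKernel_eq, depolKernel_eq, map_sum]
    refine Finset.sum_congr rfl fun s _ => ?_
    simp only [map_mul, Complex.conj_ofReal, ch_conj, neg_neg]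
    ring
  · -- positivity of the quadratic form
    intro x
    set T : (ZMod d × ZMod d) → ℂ := fun s => ∑ n : ZMod d × ZMod d, x n * ch d (sA d s n)
      with hT
    have key : dotProduct (star x)
        ((Matrix.of fun m n : ZMod d × ZMod d => depolKernel d p₂ m n).mulVec x)
        = ∑ s : ZMod d × ZMod d, ((p₂ s * Complex.normSq (T s) : ℝ) : ℂ) := by
      simp only [dotProduct, Matrix.mulVec, Matrix.of_apply, Pi.star_apply,
        RCLike.star_def, depolKernel_eq]
      calc (∑ m : ZMod d × ZMod d, (starRingEnd ℂ) (x m) *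
              ∑ n : ZMod d × ZMod d, (∑ s : ZMod d × ZMod d,
                (p₂ s : ℂ) * (ch d (-(sA d s m)) * ch d (sA d s n))) * x n)
          = ∑ m : ZMod d × ZMod d, ∑ n : ZMod d × ZMod d, ∑ s : ZMod d × ZMod d,
              (p₂ s : ℂ) * (((starRingEnd ℂ) (x m) * ch d (-(sA d s m))) *
                (x n * ch d (sA d s n))) := by
            refine Finset.sum_congr rfl fun m _ => ?_
            rw [Finset.mul_sum]
            refine Finset.sum_congr rfl fun n _ => ?_
            rw [Finset.sum_mul, Finset.mul_sum]
            refine Finset.sum_congr rfl fun s _ => ?_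
            ring
        _ = ∑ s : ZMod d × ZMod d, ∑ m : ZMod d × ZMod d, ∑ n : ZMod d × ZMod d,
              (p₂ s : ℂ) * (((starRingEnd ℂ) (x m) * ch d (-(sA d s m))) *
                (x n * ch d (sA d s n))) := sum_swap3 _
        _ = ∑ s : ZMod d × ZMod d, (p₂ s : ℂ) * ((starRingEnd ℂ) (T s) * T s) := by
            refine Finset.sum_congr rfl fun s _ => ?_
            have h1 : (starRingEnd ℂ) (T s)
                = ∑ m : ZMod d × ZMod d, (starRingEnd ℂ) (x m) * ch d (-(sA d s m)) := by
              simp only [hT, map_sum, map_mul, ch_conj]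
            rw [h1]
            simp only [hT]
            rw [Finset.sum_mul_sum]
            simp only [Finset.mul_sum]
            try exact Finset.sum_congr rfl fun m _ => Finset.sum_congr rfl fun n _ => by ring
        _ = ∑ s : ZMod d × ZMod d, ((p₂ s * Complex.normSq (T s) : ℝ) : ℂ) := by
            refine Finset.sum_congr rfl fun s _ => ?_
            rw [mul_comm ((starRingEnd ℂ) (T s)) (T s), Complex.mul_conj]
            push_cast
            ring
    rw [key]
    refine Finset.sum_nonneg fun s _ => ?_
    rw [Complex.zero_le_real]
    exact mul_nonneg (hp₂pos s) (Complex.normSq_nonneg _)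
  · -- diagonal is 1
    intro m
    rw [depolKernel]
    have h0 : ∀ s : ZMod d × ZMod d, SympZd d (m - m) s = 0 := by
      intro s
      simp [SympZd, sub_self, Prod.fst_zero, Prod.snd_zero, ZMod.val_zero]
    simp only [h0, Complex.ofReal_zero, mul_zero, Complex.exp_zero, mul_one]
    rw [← Complex.ofReal_sum, hp₂sum, Complex.ofReal_one]
  · -- compatibility with the uniform marginal
    intro r
    have hsqrt : ∀ m n : ZMod d × ZMod d,
        ((Real.sqrt (p₁ m * p₁ n) : ℝ) : ℂ) = 1 / (d:ℂ)^2 := by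
      intro m n
      rw [hp₁, hp₁]
      have h0 : (0:ℝ) ≤ 1/(d:ℝ)^2 := by positivity
      rw [Real.sqrt_mul_self h0]
      push_cast
      ring
    have inner : ∀ s : ZMod d × ZMod d,
        (∑ m : ZMod d × ZMod d, ∑ n : ZMod d × ZMod d,
          Complex.exp (Complex.I * (SympZd d (m - n) r : ℂ)) *
            Complex.exp (Complex.I * (SympZd d (n - m) s : ℂ)))
        = if s = r then ((d:ℂ))^4 else 0 := by
      intro s
      have hterm : ∀ m n : ZMod d × ZMod d,
          Complex.exp (Complex.I * (SympZd d (m - n) r : ℂ)) *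
            Complex.exp (Complex.I * (SympZd d (n - m) s : ℂ))
          = (ch d (((r.2.val:ℤ) - (s.2.val:ℤ)) * (m.1.val:ℤ)) *
              ch d (((s.1.val:ℤ) - (r.1.val:ℤ)) * (m.2.val:ℤ))) *
            (ch d (((s.2.val:ℤ) - (r.2.val:ℤ)) * (n.1.val:ℤ)) *
              ch d (((r.1.val:ℤ) - (s.1.val:ℤ)) * (n.2.val:ℤ))) := by
        intro m n
        rw [exp_symp_sub, exp_symp_sub, ← ch_add, ← ch_add, ← ch_add, ← ch_add]
        congr 1
        ring
      simp_rw [hterm]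
      rw [← Finset.sum_mul_sum]
      have factor : ∀ (c₁ c₂ : ℤ),
          (∑ m : ZMod d × ZMod d, ch d (c₁ * (m.1.val:ℤ)) * ch d (c₂ * (m.2.val:ℤ)))
          = (∑ a : ZMod d, ch d (c₁ * (a.val:ℤ))) * (∑ b : ZMod d, ch d (c₂ * (b.val:ℤ))) := by
        intro c₁ c₂
        rw [Fintype.sum_prod_type]
        dsimp only
        rw [← Finset.sum_mul_sum]
      rw [factor, factor, geomSumZMod, geomSumZMod, geomSumZMod, geomSumZMod]
      simp only [coeff_zero]
      by_cases h : s = r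
      · subst h
        norm_num
        ring
      · have h' : s.1 ≠ r.1 ∨ s.2 ≠ r.2 := by
          by_contra hcon
          push_neg at hcon
          exact h (Prod.ext hcon.1 hcon.2)
        rcases h' with h1 | h2
        · rw [if_neg h, if_neg h1, if_neg (fun he : r.1 = s.1 => h1 he.symm)]
          ring
        · rw [if_neg h, if_neg h2, if_neg (fun he : r.2 = s.2 => h2 he.symm)]
          ring
    have main : (∑ m : ZMod d × ZMod d, ∑ n : ZMod d × ZMod d,
        Complex.exp (Complex.I * (SympZd d (m - n) r : ℂ)) * depolKernel d p₂ m n *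
          ((Real.sqrt (p₁ m * p₁ n) : ℝ) : ℂ))
        = (1/(d:ℂ)^2) * ((d:ℂ)^4 * (p₂ r : ℂ)) := by
      simp only [hsqrt, depolKernel]
      calc (∑ m : ZMod d × ZMod d, ∑ n : ZMod d × ZMod d,
              Complex.exp (Complex.I * (SympZd d (m - n) r : ℂ)) *
                (∑ s : ZMod d × ZMod d, (p₂ s : ℂ) *
                  Complex.exp (Complex.I * (SympZd d (n - m) s : ℂ))) * (1/(d:ℂ)^2))
          = ∑ m : ZMod d × ZMod d, ∑ n : ZMod d × ZMod d, ∑ s : ZMod d × ZMod d,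
              (1/(d:ℂ)^2) * ((p₂ s : ℂ) *
                (Complex.exp (Complex.I * (SympZd d (m - n) r : ℂ)) *
                  Complex.exp (Complex.I * (SympZd d (n - m) s : ℂ)))) := by
            refine Finset.sum_congr rfl fun m _ => Finset.sum_congr rfl fun n _ => ?_
            simp only [Finset.mul_sum, Finset.sum_mul]
            exact Finset.sum_congr rfl fun s _ => by ring
        _ = ∑ s : ZMod d × ZMod d, ∑ m : ZMod d × ZMod d, ∑ n : ZMod d × ZMod d,
              (1/(d:ℂ)^2) * ((p₂ s : ℂ) *
                (Complex.exp (Complex.I * (SympZd d (m - n) r : ℂ)) *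
                  Complex.exp (Complex.I * (SympZd d (n - m) s : ℂ)))) := sum_swap3 _
        _ = ∑ s : ZMod d × ZMod d, (1/(d:ℂ)^2) * ((p₂ s : ℂ) *
              (if s = r then ((d:ℂ))^4 else 0)) := by
            refine Finset.sum_congr rfl fun s _ => ?_
            rw [← inner s]
            simp only [Finset.mul_sum]
            try exact Finset.sum_congr rfl fun m _ => Finset.sum_congr rfl fun n _ => by ring
        _ = (1/(d:ℂ)^2) * ((d:ℂ)^4 * (p₂ r : ℂ)) := by
            rw [← Finset.mul_sum]
            congr 1
            simp only [mul_ite, mul_zero, Finset.sum_ite_eq', Finset.mem_univ, if_pos]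
            try ring
    rw [main]
    field_simp
end
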